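/- Let J be a strongly stable monomial ideal in A[x₀,…,xₙ] over a commutative noetherian ring A, F_J a J-marked set, and I = (F_J). The following are equivalent: (a) F_J is a J-marked basis, i.e., A[x] = I ⊕ ⟨N(J)⟩ as A-modules; (b) for every degree s, I_s = ⟨F_J^{(s)}⟩; (c) for every degree s, ⟨SF_J^{(s)}⟩ ⊆ ⟨F_J^{(s)}⟩; (d) I ∩ ⟨N(J)⟩ = 0. -/

import Mathlib

open MvPolynomial

noncomputable section

/-- Exponent vectors of monomials in the variables `x₀, …, xₙ`. -/
abbrev Mon (n : ℕ) : Type := Fin (n + 1) →₀ ℕ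

namespace MarkedFamilies

variable {n : ℕ}

/-- The total degree of a monomial given by its exponent vector. -/
def mdeg (α : Mon n) : ℕ := α.sum fun _ e => e

/-- A monomial ideal, identified with its (upward closed) set of monomials. -/
def IsMonomialIdeal (J : Set (Mon n)) : Prop := ∀ α ∈ J, ∀ δ : Mon n, α + δ ∈ J

/-- A strongly stable monomial ideal: a monomial ideal such that for every monomial
`x^α ∈ J`, every variable `x_j` dividing `x^α` and every `i > j`, `(x_i/x_j)·x^α ∈ J`. -/
def IsStronglyStable (J : Set (Mon n)) : Prop :=
  IsMonomialIdeal J ∧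
    ∀ α ∈ J, ∀ j : Fin (n + 1), α j ≠ 0 → ∀ i : Fin (n + 1), j < i →
      α - Finsupp.single j 1 + Finsupp.single i 1 ∈ J

/-- The minimal monomial generators `B_J` of a monomial ideal `J`. -/
def minGens (J : Set (Mon n)) : Set (Mon n) :=
  {α | α ∈ J ∧ ∀ j : Fin (n + 1), α j ≠ 0 → α - Finsupp.single j 1 ∉ J}

/-- `min x^γ ≥ max x^δ`: every variable dividing `x^γ` is at least every variable
dividing `x^δ` (vacuously true when either monomial is `1`). -/
def minGeMax (γ δ : Mon n) : Prop := ∀ i ∈ γ.support, ∀ j ∈ δ.support, j ≤ i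

/-- Lexicographic order induced by `x₀ < ⋯ < xₙ`: `a <ₗₑₓ b` iff at the largest
index where they differ, `a` has the smaller exponent. -/
def lexLt (a b : Mon n) : Prop :=
  ∃ i : Fin (n + 1), a i < b i ∧ ∀ j : Fin (n + 1), i < j → a j = b j

/-- A saturated strongly stable ideal: strongly stable and no minimal generator is
divisible by `x₀`. -/
def IsSaturatedSS (J : Set (Mon n)) : Prop :=
  IsStronglyStable J ∧ ∀ α ∈ minGens J, α 0 = 0

/-- The truncation `J_{≥ t}`: the (monomial) ideal generated by the monomials of `J`
of degree at least `t`. -/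
def truncSet (J : Set (Mon n)) (t : ℕ) : Set (Mon n) := {α | α ∈ J ∧ t ≤ mdeg α}

section Ring

variable (A : Type*) [CommRing A]

/-- `⟨N(J)⟩`: the `A`-span of the monomials not in `J`. -/
def nSpan (J : Set (Mon n)) : Submodule A (MvPolynomial (Fin (n + 1)) A) :=
  Submodule.span A {p | ∃ β : Mon n, β ∉ J ∧ p = monomial β (1 : A)}

/-- `⟨N(J)_s⟩`: the `A`-span of the monomials of degree `s` not in `J`. -/
def nSpanDeg (J : Set (Mon n)) (s : ℕ) : Submodule A (MvPolynomial (Fin (n + 1)) A) :=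
  Submodule.span A {p | ∃ β : Mon n, β ∉ J ∧ mdeg β = s ∧ p = monomial β (1 : A)}

/-- `I_s`: the degree-`s` homogeneous component of an ideal, as an `A`-submodule. -/
def idealDeg (I : Ideal (MvPolynomial (Fin (n + 1)) A)) (s : ℕ) :
    Submodule A (MvPolynomial (Fin (n + 1)) A) :=
  Submodule.restrictScalars A I ⊓ homogeneousSubmodule (Fin (n + 1)) A s

/-- `I_{≥ s}`: the ideal `⊕_{t ≥ s} I_t`, i.e. the ideal generated by the homogeneous
elements of `I` of degree at least `s`. -/
def idealGeq (I : Ideal (MvPolynomial (Fin (n + 1)) A)) (s : ℕ) :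
    Ideal (MvPolynomial (Fin (n + 1)) A) :=
  Ideal.span {f | f ∈ I ∧ ∃ t : ℕ, s ≤ t ∧ f.IsHomogeneous t}

/-- A homogeneous ideal of the polynomial ring. -/
def IsHomogIdeal (I : Ideal (MvPolynomial (Fin (n + 1)) A)) : Prop :=
  ∀ f ∈ I, ∀ s : ℕ, homogeneousComponent s f ∈ I

variable {A}

/-- A `J`-marked set: a family assigning to each minimal generator `x^α ∈ B_J` a
polynomial `f_α = x^α − Σ_{x^β ∈ N(J)_{|α|}} c_{αβ} x^β`. -/
def IsMarkedSet (J : Set (Mon n)) (F : Mon n → MvPolynomial (Fin (n + 1)) A) : Prop :=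
  ∀ α ∈ minGens J, (F α).coeff α = 1 ∧
    ∀ β ∈ (F α).support, β ≠ α → β ∉ J ∧ mdeg β = mdeg α

/-- The ideal generated by a marked set. -/
def markedIdeal (J : Set (Mon n)) (F : Mon n → MvPolynomial (Fin (n + 1)) A) :
    Ideal (MvPolynomial (Fin (n + 1)) A) :=
  Ideal.span (F '' minGens J)

/-- A `J`-marked basis: a `J`-marked set `F` with `A[x] = (F) ⊕ ⟨N(J)⟩` as `A`-modules. -/
def IsMarkedBasis (J : Set (Mon n)) (F : Mon n → MvPolynomial (Fin (n + 1)) A) : Prop :=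
  IsMarkedSet J F ∧
    IsCompl (Submodule.restrictScalars A (markedIdeal J F)) (nSpan A J)

/-- `F_J^{(s)} = { x^δ f_α : deg(x^δ f_α) = s, min x^α ≥ max x^δ }`. -/
def FSet (J : Set (Mon n)) (F : Mon n → MvPolynomial (Fin (n + 1)) A) (s : ℕ) :
    Set (MvPolynomial (Fin (n + 1)) A) :=
  {p | ∃ α δ : Mon n, α ∈ minGens J ∧ mdeg α + mdeg δ = s ∧ minGeMax α δ ∧
        p = monomial δ (1 : A) * F α}

/-- `F̂_J^{(s)} = { x^δ f_α : deg(x^δ f_α) = s, min x^α < max x^δ }`. -/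
def FHatSet (J : Set (Mon n)) (F : Mon n → MvPolynomial (Fin (n + 1)) A) (s : ℕ) :
    Set (MvPolynomial (Fin (n + 1)) A) :=
  {p | ∃ α δ : Mon n, α ∈ minGens J ∧ mdeg α + mdeg δ = s ∧ ¬ minGeMax α δ ∧
        p = monomial δ (1 : A) * F α}

/-- `SF_J^{(s)} = { x^δ f_β − x^γ f_α : x^δ f_β ∈ F̂_J^{(s)}, x^γ f_α ∈ F_J^{(s)},
x^δ x^β = x^γ x^α }`. -/
def SFSet (J : Set (Mon n)) (F : Mon n → MvPolynomial (Fin (n + 1)) A) (s : ℕ) :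
    Set (MvPolynomial (Fin (n + 1)) A) :=
  {p | ∃ α γ β δ : Mon n, α ∈ minGens J ∧ β ∈ minGens J ∧
      mdeg β + mdeg δ = s ∧ ¬ minGeMax β δ ∧
      mdeg α + mdeg γ = s ∧ minGeMax α γ ∧
      δ + β = γ + α ∧ p = monomial δ (1 : A) * F β - monomial γ (1 : A) * F α}

/-- A `(J_s)`-marked set: one marked polynomial `f̃_γ = x^γ − Σ_{x^δ ∈ N(J)_s} d_{γδ} x^δ`
for each monomial `x^γ` of degree `s` in `J`. -/
def IsTruncMarkedSet (J : Set (Mon n)) (s : ℕ)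
    (f : Mon n → MvPolynomial (Fin (n + 1)) A) : Prop :=
  ∀ γ : Mon n, γ ∈ J → mdeg γ = s →
    (f γ).coeff γ = 1 ∧ ∀ β ∈ (f γ).support, β ≠ γ → β ∉ J ∧ mdeg β = s

end Ring

/-- Index set for the generic coefficients `C_{αβ}` (`x^α ∈ B_J`, `x^β ∈ N(J)_{|α|}`). -/
abbrev CIdx (J : Set (Mon n)) : Type :=
  {p : Mon n × Mon n // p.1 ∈ minGens J ∧ p.2 ∉ J ∧ mdeg p.2 = mdeg p.1}

/-- The coefficient ring `ℤ[C]`. -/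
abbrev ZC (J : Set (Mon n)) : Type := MvPolynomial (CIdx J) ℤ

/-- The generic `J`-marked set `𝓕_J = { x^α − Σ_{x^β ∈ N(J)_{|α|}} C_{αβ} x^β }`
in `ℤ[C][x]`, characterized through its coefficients. -/
def IsGenericMarkedSet (J : Set (Mon n))
    (𝓕 : Mon n → MvPolynomial (Fin (n + 1)) (ZC J)) : Prop :=
  ∀ α : Mon n, ∀ hα : α ∈ minGens J,
    (𝓕 α).coeff α = 1 ∧
    (∀ γ : Mon n, ∀ hγ : γ ∉ J ∧ mdeg γ = mdeg α,
      (𝓕 α).coeff γ = - MvPolynomial.X ⟨(α, γ), hα, hγ.1, hγ.2⟩) ∧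
    (∀ γ : Mon n, γ ≠ α → ¬(γ ∉ J ∧ mdeg γ = mdeg α) → (𝓕 α).coeff γ = 0)

/-- The ideal `𝔦_J ⊆ ℤ[C]` generated by the `x`-coefficients of all polynomials
in `(𝓕_J) ∩ ⟨N(J)⟩`. -/
def markedCoeffIdeal (J : Set (Mon n))
    (𝓕 : Mon n → MvPolynomial (Fin (n + 1)) (ZC J)) : Ideal (ZC J) :=
  Ideal.span {c : ZC J | ∃ p : MvPolynomial (Fin (n + 1)) (ZC J),
    p ∈ markedIdeal J 𝓕 ∧ p ∈ nSpan (ZC J) J ∧ ∃ γ : Mon n, p.coeff γ = c}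

/-- The evaluation homomorphism `φ_{F_J} : ℤ[C] → A`, `C_{αβ} ↦ c_{αβ}`, associated to a
`J`-marked set `F` with `f_α = x^α − Σ c_{αβ} x^β` (so `c_{αβ} = −(F α).coeff β`). -/
noncomputable def evalHom (J : Set (Mon n)) {A : Type*} [CommRing A]
    (F : Mon n → MvPolynomial (Fin (n + 1)) A) : ZC J →+* A :=
  MvPolynomial.eval₂Hom (Int.castRingHom A) fun p => -((F p.val.1).coeff p.val.2)

/-- `x^γ` is the `σ`-leading monomial of `g` (with nonzero leading coefficient). -/
def IsLeadingMon {A : Type*} [CommRing A] (σlt : Mon n → Mon n → Prop)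
    (g : MvPolynomial (Fin (n + 1)) A) (γ : Mon n) : Prop :=
  g.coeff γ ≠ 0 ∧ ∀ δ ∈ g.support, δ ≠ γ → σlt δ γ

/-- `LC(I, x^γ)`: the set of leading coefficients at `x^γ` of elements of `I`,
together with `0`. -/
def LCset {A : Type*} [CommRing A] (σlt : Mon n → Mon n → Prop)
    (I : Ideal (MvPolynomial (Fin (n + 1)) A)) (γ : Mon n) : Set A :=
  {a | ∃ g ∈ I, IsLeadingMon σlt g γ ∧ g.coeff γ = a} ∪ {0}

/-- A monic ideal with respect to the term ordering `σ`. -/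
def IsMonicIdeal {A : Type*} [CommRing A] (σlt : Mon n → Mon n → Prop)
    (I : Ideal (MvPolynomial (Fin (n + 1)) A)) : Prop :=
  ∀ γ : Mon n, LCset σlt I γ = {0} ∨ LCset σlt I γ = Set.univ

/-- The set of `σ`-leading monomials of elements of `I` (i.e. `in_σ(I)`,
identified with its set of monomials). -/
def leadingMons {A : Type*} [CommRing A] (σlt : Mon n → Mon n → Prop)
    (I : Ideal (MvPolynomial (Fin (n + 1)) A)) : Set (Mon n) :=
  {γ | ∃ g ∈ I, IsLeadingMon σlt g γ}

end MarkedFamilies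
end
open MvPolynomial
namespace MarkedFamilies
variable {n : ℕ}

lemma mdeg_add (a b : Mon n) : mdeg (a + b) = mdeg a + mdeg b :=
  Finsupp.sum_add_index' (fun _ => rfl) (fun _ _ _ => rfl)

lemma mdeg_eq_sum (a : Mon n) : mdeg a = ∑ j ∈ a.support, a j := rfl

lemma apply_le_mdeg (a : Mon n) (i : Fin (n+1)) : a i ≤ mdeg a := by
  by_cases h : i ∈ a.support
  · rw [mdeg_eq_sum]
    exact Finset.single_le_sum (f := fun j => a j) (fun _ _ => Nat.zero_le _) h
  · simp [Finsupp.notMem_support_iff.mp h]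

lemma mdeg_single (j : Fin (n+1)) : mdeg (Finsupp.single j (1:ℕ)) = 1 := by
  simp [mdeg]

lemma mdeg_mono {a b : Mon n} (h : a ≤ b) : mdeg a ≤ mdeg b := by
  have : a + (b - a) = b := add_tsub_cancel_of_le h
  calc mdeg a ≤ mdeg a + mdeg (b - a) := Nat.le_add_right _ _
  _ = mdeg b := by rw [← mdeg_add, this]

lemma mem_of_le {J : Set (Mon n)} (hmono : IsMonomialIdeal J) {a b : Mon n}
    (ha : a ∈ J) (hab : a ≤ b) : b ∈ J := by
  have := hmono a ha (b - a)
  rwa [add_tsub_cancel_of_le hab] at this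

variable {A : Type*} [CommRing A]

lemma monomial_mul_eq_sum (δ : Mon n) (f : MvPolynomial (Fin (n+1)) A) :
    monomial δ (1:A) * f = ∑ β ∈ f.support, monomial (δ + β) (f.coeff β) := by
  conv_lhs => rw [f.as_sum]
  rw [Finset.mul_sum]
  exact Finset.sum_congr rfl fun β _ => by rw [monomial_mul, one_mul]

lemma coeff_monomial_mul'' (δ ε : Mon n) (f : MvPolynomial (Fin (n+1)) A) :
    (monomial δ (1:A) * f).coeff ε = if δ ≤ ε then f.coeff (ε - δ) else 0 := by
  split_ifs with h
  · obtain ⟨τ, rfl⟩ : ∃ τ, ε = δ + τ := ⟨ε - δ, (add_tsub_cancel_of_le h).symm⟩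
    rw [coeff_monomial_mul, one_mul, add_tsub_cancel_left]
  · rw [monomial_mul_eq_sum, coeff_sum]
    refine Finset.sum_eq_zero fun β _ => ?_
    rw [coeff_monomial, if_neg]
    rintro rfl
    exact h le_self_add

lemma mem_nSpan_iff {J : Set (Mon n)} {f : MvPolynomial (Fin (n+1)) A} :
    f ∈ nSpan A J ↔ ∀ γ ∈ f.support, γ ∉ J := by
  constructor
  · intro hf
    classical
    induction hf using Submodule.span_induction with
    | mem p hp =>
      obtain ⟨β, hβ, rfl⟩ := hp
      intro γ hγ
      rw [support_monomial] at hγ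
      rcases eq_or_ne (1:A) 0 with h1 | h1
      · simp [h1] at hγ
      · simp [h1] at hγ; subst hγ; exact hβ
    | zero => simp
    | add x y hx hy ihx ihy =>
      intro γ hγ
      rcases Finset.mem_union.mp (MvPolynomial.support_add hγ) with h | h
      · exact ihx γ h
      · exact ihy γ h
    | smul a x hx ih =>
      intro γ hγ
      exact ih γ (Finsupp.support_smul hγ)
  · intro hf
    rw [f.as_sum]
    refine Submodule.sum_mem _ fun γ hγ => ?_
    have : monomial γ (coeff γ f) = (coeff γ f) • monomial γ (1:A) := by
      rw [smul_monomial, smul_eq_mul, mul_one]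
    rw [this]
    exact Submodule.smul_mem _ _ (Submodule.subset_span ⟨γ, hf γ hγ, rfl⟩)

lemma mem_nSpanDeg_iff {J : Set (Mon n)} {s : ℕ} {f : MvPolynomial (Fin (n+1)) A} :
    f ∈ nSpanDeg A J s ↔ ∀ γ ∈ f.support, γ ∉ J ∧ mdeg γ = s := by
  constructor
  · intro hf
    classical
    induction hf using Submodule.span_induction with
    | mem p hp =>
      obtain ⟨β, hβ, hd, rfl⟩ := hp
      intro γ hγ
      rw [support_monomial] at hγ
      rcases eq_or_ne (1:A) 0 with h1 | h1
      · simp [h1] at hγ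
      · simp [h1] at hγ; subst hγ; exact ⟨hβ, hd⟩
    | zero => simp
    | add x y hx hy ihx ihy =>
      intro γ hγ
      rcases Finset.mem_union.mp (MvPolynomial.support_add hγ) with h | h
      · exact ihx γ h
      · exact ihy γ h
    | smul a x hx ih =>
      intro γ hγ
      exact ih γ (Finsupp.support_smul hγ)
  · intro hf
    rw [f.as_sum]
    refine Submodule.sum_mem _ fun γ hγ => ?_
    have : monomial γ (coeff γ f) = (coeff γ f) • monomial γ (1:A) := by
      rw [smul_monomial, smul_eq_mul, mul_one]
    rw [this]
    exact Submodule.smul_mem _ _ (Submodule.subset_span ⟨γ, (hf γ hγ).1, (hf γ hγ).2, rfl⟩)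

end MarkedFamilies
namespace MarkedFamilies
variable {n : ℕ}

/-- Embedding of monomials into `Lex` order with reversed variables. -/
def emb (d : Mon n) : Lex (Fin (n + 1) →₀ ℕ) := toLex (Finsupp.equivMapDomain Fin.revPerm d)

lemma emb_apply (d : Mon n) (i : Fin (n + 1)) : ofLex (emb d) i = d i.rev := by
  show Finsupp.equivMapDomain Fin.revPerm d i = d i.rev
  rw [Finsupp.equivMapDomain_apply, Fin.revPerm_symm]
  rfl

lemma emb_lt_iff {γ δ : Mon n} : emb γ < emb δ ↔ lexLt γ δ := by
  show Finsupp.Lex _ _ _ _ ↔ _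
  rw [Finsupp.lex_def]
  constructor
  · rintro ⟨j, h1, h2⟩
    refine ⟨j.rev, ?_, fun k hk => ?_⟩
    · have e1 := emb_apply γ j; have e2 := emb_apply δ j
      show γ j.rev < δ j.rev
      rw [← e1, ← e2]; exact h2
    · have := h1 k.rev (Fin.rev_lt_iff.mpr hk)
      rw [emb_apply, emb_apply, Fin.rev_rev] at this
      exact this
  · rintro ⟨i, h2, h1⟩
    refine ⟨i.rev, fun d hd => ?_, ?_⟩
    · rw [emb_apply, emb_apply]
      exact h1 d.rev (Fin.lt_rev_iff.mp hd)
    · rw [emb_apply, emb_apply, Fin.rev_rev]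
      exact h2

lemma lexLt_irrefl (δ : Mon n) : ¬ lexLt δ δ := by
  rw [← emb_lt_iff]; exact lt_irrefl _

lemma star_exists {J : Set (Mon n)} (hJ : IsStronglyStable J) :
    ∀ ε ∈ J, ∃ α δ : Mon n, α ∈ minGens J ∧ minGeMax α δ ∧ δ + α = ε := by
  suffices h : ∀ d, ∀ ε : Mon n, ε ∈ J → mdeg ε = d →
      ∃ α δ : Mon n, α ∈ minGens J ∧ minGeMax α δ ∧ δ + α = ε by
    exact fun ε hε => h (mdeg ε) ε hε rfl
  intro d
  induction d using Nat.strong_induction_on with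
  | _ d ih =>
  intro ε hε hd
  by_cases hmin : ε ∈ minGens J
  · exact ⟨ε, 0, hmin, by intro i _ j hj; simp at hj, zero_add ε⟩
  · have hex : ∃ j, ε j ≠ 0 ∧ ε - Finsupp.single j 1 ∈ J := by
      by_contra hc; push_neg at hc
      exact hmin ⟨hε, fun j hj => hc j hj⟩
    obtain ⟨j, hj, hjJ⟩ := hex
    have hsupp : ε.support.Nonempty := ⟨j, Finsupp.mem_support_iff.mpr hj⟩
    set m := ε.support.min' hsupp with hm
    have hmsupp : m ∈ ε.support := Finset.min'_mem _ _
    have hmε : ε m ≠ 0 := Finsupp.mem_support_iff.mp hmsupp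
    have hmJ : ε - Finsupp.single m 1 ∈ J := by
      rcases eq_or_ne j m with rfl | hne
      · exact hjJ
      · have hmj : m < j :=
          lt_of_le_of_ne (Finset.min'_le _ _ (Finsupp.mem_support_iff.mpr hj))
            (fun h => hne h.symm)
        have h1 : (ε - Finsupp.single j 1 : Mon n) m ≠ 0 := by
          rw [Finsupp.tsub_apply]
          rw [Finsupp.single_apply, if_neg hne]
          simpa using hmε
        have hst := hJ.2 _ hjJ m h1 j hmj
        have harr : ε - Finsupp.single j 1 - Finsupp.single m 1 + Finsupp.single j 1
            = ε - Finsupp.single m 1 := by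
          ext i
          have hj1 : 1 ≤ ε j := Nat.one_le_iff_ne_zero.mpr hj
          simp only [Finsupp.add_apply, Finsupp.tsub_apply, Finsupp.single_apply]
          rcases eq_or_ne j i with rfl | h1
          · rw [if_pos rfl, if_neg (show ¬ m = j from fun h => hne h.symm)]
            omega
          · rw [if_neg h1]
            simp
        rwa [harr] at hst
    have hle : Finsupp.single m 1 ≤ ε := Finsupp.single_le_iff.mpr (Nat.one_le_iff_ne_zero.mpr hmε)
    have hdd : mdeg (ε - Finsupp.single m 1) + 1 = d := by
      calc mdeg (ε - Finsupp.single m 1) + 1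
          = mdeg (ε - Finsupp.single m 1) + mdeg (Finsupp.single m 1) := by rw [mdeg_single]
        _ = mdeg ((ε - Finsupp.single m 1) + Finsupp.single m 1) := (mdeg_add _ _).symm
        _ = mdeg ε := by rw [tsub_add_cancel_of_le hle]
        _ = d := hd
    obtain ⟨α, δ', hα, hge, hsum⟩ := ih (mdeg (ε - Finsupp.single m 1)) (by omega) _ hmJ rfl
    refine ⟨α, δ' + Finsupp.single m 1, hα, ?_, ?_⟩
    · intro i hi k hk
      rcases Finset.mem_union.mp (Finsupp.support_add hk) with h | h
      · exact hge i hi k h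
      · have : k = m := Finset.mem_singleton.mp (Finsupp.support_single_subset h)
        subst this
        have hαε : α ≤ ε := le_trans (le_trans le_add_self (le_of_eq hsum)) tsub_le_self
        have : i ∈ ε.support := by
          rw [Finsupp.mem_support_iff] at hi ⊢
          have := Finsupp.le_def.mp hαε i
          omega
        exact Finset.min'_le _ _ this
    · rw [add_right_comm, hsum, tsub_add_cancel_of_le hle]

lemma key_lex {J : Set (Mon n)} (hmono : IsMonomialIdeal J) {β α' γ' δ : Mon n}
    (hβ : β ∉ J) (hα' : α' ∈ J) (hge : minGeMax α' γ') (heq : γ' + α' = δ + β) :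
    lexLt γ' δ := by
  classical
  have hne : γ' ≠ δ := by
    rintro rfl
    exact hβ (add_left_cancel heq ▸ hα')
  set D := Finset.univ.filter (fun i => γ' i ≠ δ i) with hD
  have hDne : D.Nonempty := by
    by_contra hc
    rw [Finset.not_nonempty_iff_eq_empty] at hc
    apply hne
    ext i
    by_contra hci
    exact absurd (hD ▸ Finset.mem_filter.mpr ⟨Finset.mem_univ i, hci⟩) (by rw [hc]; simp)
  set i := D.max' hDne with hi
  have hiD : i ∈ D := Finset.max'_mem _ _
  have hineq : γ' i ≠ δ i := (Finset.mem_filter.mp hiD).2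
  have htop : ∀ j, i < j → γ' j = δ j := fun j hj => by
    by_contra hc
    exact absurd (Finset.le_max' D j (Finset.mem_filter.mpr ⟨Finset.mem_univ _, hc⟩))
      (not_le.mpr hj)
  have hco : ∀ j, γ' j + α' j = δ j + β j := fun j => by
    have := congrArg (fun f : Mon n => f j) heq
    simpa [Finsupp.add_apply] using this
  refine ⟨i, ?_, htop⟩
  rcases lt_or_gt_of_ne hineq with h | h
  · exact h
  · exfalso
    have hig : i ∈ γ'.support := Finsupp.mem_support_iff.mpr (by omega)
    have hsup : α' ≤ β := by
      rw [Finsupp.le_def]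
      intro j
      rcases lt_trichotomy j i with hj | hji | hj
      · have hz : α' j = 0 := by
          by_contra hc
          have := hge j (Finsupp.mem_support_iff.mpr hc) i hig
          omega
        omega
      · rw [hji]; have := hco i; omega
      · have := htop j hj; have := hco j; omega
    exact hβ (mem_of_le hmono hα' hsup)

lemma uniq_aux {J : Set (Mon n)} (hmono : IsMonomialIdeal J) {α α'' δ δ'' : Mon n}
    (hα : α ∈ minGens J) (hα'' : α'' ∈ J) (hge'' : minGeMax α'' δ'')
    (heq : δ'' + α'' = δ + α) (i : Fin (n + 1)) (htop : ∀ j, i < j → δ'' j = δ j)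
    (hlt : δ i < δ'' i) : False := by
  have hig : i ∈ δ''.support := Finsupp.mem_support_iff.mpr (by omega)
  have hco : ∀ j, δ'' j + α'' j = δ j + α j := fun j => by
    have := congrArg (fun f : Mon n => f j) heq
    simpa [Finsupp.add_apply] using this
  have hsup : ∀ j, α'' j ≤ α j ∧ (j = i → α'' j < α j) := by
    intro j
    rcases lt_trichotomy j i with hj | hji | hj
    · have hz : α'' j = 0 := by
        by_contra hc
        have := hge'' j (Finsupp.mem_support_iff.mpr hc) i hig
        omega
      constructor
      · omega
      · intro h; omega
    · subst hji; have := hco j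
      constructor
      · omega
      · intro h; omega
    · have := htop j hj; have := hco j
      constructor
      · omega
      · intro h; omega
  have hi0 : α i ≠ 0 := by have := (hsup i).2 rfl; omega
  apply hα.2 i hi0
  refine mem_of_le hmono hα'' ?_
  rw [Finsupp.le_def]
  intro j
  rw [Finsupp.tsub_apply, Finsupp.single_apply]
  rcases eq_or_ne i j with rfl | hij
  · have := (hsup i).2 rfl; simp; omega
  · have := (hsup j).1; simp [hij]; omega

lemma star_unique {J : Set (Mon n)} (hmono : IsMonomialIdeal J) {α α'' δ δ'' : Mon n}
    (hα : α ∈ minGens J) (hα'' : α'' ∈ minGens J)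
    (hge : minGeMax α δ) (hge'' : minGeMax α'' δ'')
    (heq : δ'' + α'' = δ + α) : δ'' = δ ∧ α'' = α := by
  classical
  by_cases h : δ'' = δ
  · subst h; exact ⟨rfl, add_left_cancel heq⟩
  · exfalso
    set D := Finset.univ.filter (fun i => δ'' i ≠ δ i) with hD
    have hDne : D.Nonempty := by
      by_contra hc
      rw [Finset.not_nonempty_iff_eq_empty] at hc
      apply h
      ext i
      by_contra hci
      exact absurd (hD ▸ Finset.mem_filter.mpr ⟨Finset.mem_univ i, hci⟩) (by rw [hc]; simp)
    set i := D.max' hDne with hi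
    have hiD : i ∈ D := Finset.max'_mem _ _
    have hineq : δ'' i ≠ δ i := (Finset.mem_filter.mp hiD).2
    have htop : ∀ j, i < j → δ'' j = δ j := fun j hj => by
      by_contra hc
      exact absurd (Finset.le_max' D j (Finset.mem_filter.mpr ⟨Finset.mem_univ _, hc⟩))
        (not_le.mpr hj)
    rcases lt_or_gt_of_ne hineq with hlt | hlt
    · exact uniq_aux hmono hα'' hα.1 hge heq.symm i (fun j hj => (htop j hj).symm) hlt
    · exact uniq_aux hmono hα hα''.1 hge'' heq i htop hlt

end MarkedFamilies
namespace MarkedFamilies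
variable {n : ℕ} {A : Type*} [CommRing A]

lemma degree_eq_mdeg (a : Mon n) : a.degree = mdeg a := rfl

lemma markedSet_homog {J : Set (Mon n)} {F : Mon n → MvPolynomial (Fin (n + 1)) A}
    (hF : IsMarkedSet J F) {α : Mon n} (hα : α ∈ minGens J) :
    F α ∈ homogeneousSubmodule (Fin (n + 1)) A (mdeg α) := by
  have h : (∑ β ∈ (F α).support, monomial β (coeff β (F α)))
      ∈ homogeneousSubmodule (Fin (n + 1)) A (mdeg α) := by
    refine Submodule.sum_mem _ fun β hβ => ?_
    rw [mem_homogeneousSubmodule]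
    refine isHomogeneous_monomial _ ?_
    rw [degree_eq_mdeg]
    rcases eq_or_ne β α with rfl | hne
    · rfl
    · exact ((hF α hα).2 β hβ hne).2
  rwa [← (F α).as_sum] at h

lemma monMul_homog {J : Set (Mon n)} {F : Mon n → MvPolynomial (Fin (n + 1)) A}
    (hF : IsMarkedSet J F) {α : Mon n} (hα : α ∈ minGens J) (δ : Mon n) :
    monomial δ (1 : A) * F α ∈ homogeneousSubmodule (Fin (n + 1)) A (mdeg α + mdeg δ) := by
  rw [mem_homogeneousSubmodule]
  have h := IsHomogeneous.mul (isHomogeneous_monomial (1:A) (degree_eq_mdeg δ))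
    (mem_homogeneousSubmodule _ _ |>.mp (markedSet_homog hF hα))
  rwa [Nat.add_comm (mdeg δ) (mdeg α)] at h

variable (A) in
/-- The `A`-span of all monomial multiples of the marked polynomials. -/
noncomputable def Mfull (J : Set (Mon n)) (F : Mon n → MvPolynomial (Fin (n + 1)) A) :
    Submodule A (MvPolynomial (Fin (n + 1)) A) :=
  Submodule.span A {p | ∃ α δ : Mon n, α ∈ minGens J ∧ p = monomial δ (1 : A) * F α}

variable (A) in
/-- The `A`-span of the degree-`s` monomial multiples of the marked polynomials. -/
noncomputable def Mdeg (J : Set (Mon n)) (F : Mon n → MvPolynomial (Fin (n + 1)) A) (s : ℕ) :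
    Submodule A (MvPolynomial (Fin (n + 1)) A) :=
  Submodule.span A
    {p | ∃ α δ : Mon n, α ∈ minGens J ∧ mdeg α + mdeg δ = s ∧ p = monomial δ (1 : A) * F α}

lemma monMul_mem_ideal {J : Set (Mon n)} {F : Mon n → MvPolynomial (Fin (n + 1)) A}
    {α : Mon n} (hα : α ∈ minGens J) (δ : Mon n) :
    monomial δ (1 : A) * F α ∈ markedIdeal J F :=
  Ideal.mul_mem_left _ _ (Ideal.subset_span ⟨α, hα, rfl⟩)

lemma smul_monMul (c : A) (τ : Mon n) (g : MvPolynomial (Fin (n + 1)) A) :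
    monomial τ c * g = c • (monomial τ (1 : A) * g) := by
  rw [← smul_mul_assoc, smul_monomial, smul_eq_mul, mul_one]

lemma Mfull_mul_mem {J : Set (Mon n)} {F : Mon n → MvPolynomial (Fin (n + 1)) A}
    (r : MvPolynomial (Fin (n + 1)) A) {f : MvPolynomial (Fin (n + 1)) A}
    (hf : f ∈ Mfull A J F) : r * f ∈ Mfull A J F := by
  induction hf using Submodule.span_induction with
  | mem p hp =>
    obtain ⟨α, δ, hα, rfl⟩ := hp
    have hexp : r * (monomial δ (1:A) * F α)
        = ∑ μ ∈ r.support, (r.coeff μ) • (monomial (μ + δ) (1:A) * F α) := by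
      conv_lhs => rw [r.as_sum]
      rw [Finset.sum_mul]
      refine Finset.sum_congr rfl fun μ _ => ?_
      rw [← mul_assoc, monomial_mul, mul_one, smul_monMul]
    rw [hexp]
    exact Submodule.sum_mem _ fun μ _ =>
      Submodule.smul_mem _ _ (Submodule.subset_span ⟨α, μ + δ, hα, rfl⟩)
  | zero => rw [mul_zero]; exact Submodule.zero_mem _
  | add x y hx hy ihx ihy => rw [mul_add]; exact Submodule.add_mem _ ihx ihy
  | smul a x hx ih => rw [mul_smul_comm]; exact Submodule.smul_mem _ _ ih

lemma Mfull_eq {J : Set (Mon n)} {F : Mon n → MvPolynomial (Fin (n + 1)) A} :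
    Submodule.restrictScalars A (markedIdeal J F) = Mfull A J F := by
  apply le_antisymm
  · intro f hf
    have hf' : f ∈ markedIdeal J F := hf
    clear hf
    induction hf' using Submodule.span_induction with
    | mem p hp =>
      obtain ⟨a, ha, rfl⟩ := hp
      exact Submodule.subset_span ⟨a, 0, ha, by rw [monomial_zero', C_1, one_mul]⟩
    | zero => exact Submodule.zero_mem _
    | add x y hx hy ihx ihy => exact Submodule.add_mem _ ihx ihy
    | smul a x hx ih => rw [smul_eq_mul]; exact Mfull_mul_mem a ih
  · rw [Mfull, Submodule.span_le]
    rintro p ⟨α, δ, hα, rfl⟩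
    exact monMul_mem_ideal hα δ

lemma homComp_Mfull {J : Set (Mon n)} {F : Mon n → MvPolynomial (Fin (n + 1)) A}
    (hF : IsMarkedSet J F) (s : ℕ) {f : MvPolynomial (Fin (n + 1)) A}
    (hf : f ∈ Mfull A J F) : homogeneousComponent s f ∈ Mdeg A J F s := by
  induction hf using Submodule.span_induction with
  | mem p hp =>
    obtain ⟨α, δ, hα, rfl⟩ := hp
    rw [homogeneousComponent_of_mem (monMul_homog hF hα δ)]
    split_ifs with h
    · exact Submodule.subset_span ⟨α, δ, hα, h.symm, rfl⟩
    · exact Submodule.zero_mem _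
  | zero => rw [map_zero]; exact Submodule.zero_mem _
  | add x y hx hy ihx ihy => rw [map_add]; exact Submodule.add_mem _ ihx ihy
  | smul a x hx ih => rw [map_smul]; exact Submodule.smul_mem _ _ ih

lemma Mdeg_le_idealDeg {J : Set (Mon n)} {F : Mon n → MvPolynomial (Fin (n + 1)) A}
    (hF : IsMarkedSet J F) (s : ℕ) :
    Mdeg A J F s ≤ idealDeg A (markedIdeal J F) s := by
  rw [Mdeg, Submodule.span_le]
  rintro p ⟨α, δ, hα, hdeg, rfl⟩
  refine ⟨monMul_mem_ideal hα δ, ?_⟩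
  rw [← hdeg]
  exact monMul_homog hF hα δ

lemma idealDeg_le_Mdeg {J : Set (Mon n)} {F : Mon n → MvPolynomial (Fin (n + 1)) A}
    (hF : IsMarkedSet J F) (s : ℕ) :
    idealDeg A (markedIdeal J F) s ≤ Mdeg A J F s := by
  rintro f ⟨hfI, hfh⟩
  have h1 : homogeneousComponent s f = f := by
    rw [homogeneousComponent_of_mem hfh, if_pos rfl]
  rw [← h1]
  have hfM : f ∈ Mfull A J F := by rw [← Mfull_eq]; exact hfI
  exact homComp_Mfull hF s hfM

end MarkedFamilies
namespace MarkedFamilies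
variable {n : ℕ} {A : Type*} [CommRing A]

lemma monomial_mem_sup {J : Set (Mon n)} (hJ : IsStronglyStable J)
    {F : Mon n → MvPolynomial (Fin (n + 1)) A} (hF : IsMarkedSet J F) (s : ℕ) :
    ∀ δ α : Mon n, α ∈ minGens J → minGeMax α δ → mdeg α + mdeg δ = s →
      monomial (δ + α) (1 : A) ∈ Submodule.span A (FSet J F s) ⊔ nSpanDeg A J s := by
  have wfr : WellFounded (fun a b : Mon n => emb a < emb b) :=
    InvImage.wf emb wellFounded_lt
  intro δ
  refine wfr.induction
    (C := fun δ => ∀ α : Mon n, α ∈ minGens J → minGeMax α δ → mdeg α + mdeg δ = s →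
      monomial (δ + α) (1 : A) ∈ Submodule.span A (FSet J F s) ⊔ nSpanDeg A J s) δ ?_
  clear δ
  intro δ ih α hα hge hdeg
  rcases subsingleton_or_nontrivial A with hA | hA
  · rw [Subsingleton.elim (monomial (δ + α) (1:A)) 0]; exact zero_mem _
  classical
  have hcoeffα : (F α).coeff α = 1 := (hF α hα).1
  have hαsupp : α ∈ (F α).support := by
    rw [mem_support_iff, hcoeffα]; exact one_ne_zero
  have hid : monomial (δ + α) (1:A)
      = monomial δ (1:A) * F α
        - ∑ β ∈ (F α).support.erase α, (F α).coeff β • monomial (δ + β) (1:A) := by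
    rw [monomial_mul_eq_sum, ← Finset.add_sum_erase _ _ hαsupp, hcoeffα]
    have : ∀ β ∈ (F α).support.erase α,
        monomial (δ + β) ((F α).coeff β) = (F α).coeff β • monomial (δ + β) (1:A) := by
      intro β _
      rw [smul_monomial, smul_eq_mul, mul_one]
    rw [Finset.sum_congr rfl this]
    abel
  rw [hid]
  refine Submodule.sub_mem _ ?_ ?_
  · exact Submodule.mem_sup_left (Submodule.subset_span ⟨α, δ, hα, hdeg, hge, rfl⟩)
  · refine Submodule.sum_mem _ fun β hβ => Submodule.smul_mem _ _ ?_
    have hβs := Finset.mem_of_mem_erase hβ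
    have hβα : β ≠ α := Finset.ne_of_mem_erase hβ
    obtain ⟨hβJ, hβdeg⟩ := (hF α hα).2 β hβs hβα
    by_cases hmem : δ + β ∈ J
    · obtain ⟨α', δ', hα', hge', hsum⟩ := star_exists hJ _ hmem
      have hkey : lexLt δ' δ := key_lex hJ.1 hβJ hα'.1 hge' hsum
      have hdeg' : mdeg α' + mdeg δ' = s := by
        have h1 : mdeg δ' + mdeg α' = mdeg δ + mdeg β := by
          rw [← mdeg_add, ← mdeg_add, hsum]
        omega
      have := ih δ' (emb_lt_iff.mpr hkey) α' hα' hge' hdeg'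
      rwa [hsum] at this
    · refine Submodule.mem_sup_right (Submodule.subset_span ⟨δ + β, hmem, ?_, rfl⟩)
      rw [mdeg_add]; omega

lemma span_FSet_nSpan_eq_zero {J : Set (Mon n)} (hJ : IsStronglyStable J)
    {F : Mon n → MvPolynomial (Fin (n + 1)) A} (hF : IsMarkedSet J F) {s : ℕ}
    {g : MvPolynomial (Fin (n + 1)) A} (hg : g ∈ Submodule.span A (FSet J F s))
    (hgN : ∀ ε ∈ g.support, ε ∉ J) : g = 0 := by
  classical
  rcases subsingleton_or_nontrivial A with hA | hA
  · exact Subsingleton.elim g 0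
  obtain ⟨c, hcs, hsum⟩ := Submodule.mem_span_set.mp hg
  rcases Finset.eq_empty_or_nonempty c.support with hc | hc
  · rw [← hsum, Finsupp.sum, hc, Finset.sum_empty]
  exfalso
  have hdata : ∀ p ∈ c.support, ∃ α δ : Mon n, α ∈ minGens J ∧ mdeg α + mdeg δ = s ∧
      minGeMax α δ ∧ p = monomial δ (1:A) * F α := fun p hp => hcs hp
  choose aα aδ h1 h2 h3 h4 using hdata
  obtain ⟨p0, hp0att, hmax⟩ := Finset.exists_max_image c.support.attach
    (fun p => emb (aδ p.1 p.2)) (Finset.attach_nonempty_iff.mpr hc)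
  set α0 := aα p0.1 p0.2 with hα0
  set δ0 := aδ p0.1 p0.2 with hδ0
  set ε := δ0 + α0 with hε
  have hα0J : α0 ∈ J := (h1 p0.1 p0.2).1
  have hεJ : ε ∈ J := mem_of_le hJ.1 hα0J le_add_self
  have hcoeff : g.coeff ε = 0 := by
    by_contra h
    exact (hgN ε (mem_support_iff.mpr h)) hεJ
  have hexpand : g.coeff ε = ∑ p ∈ c.support, c p * p.coeff ε := by
    rw [← hsum, Finsupp.sum]
    rw [coeff_sum]
    exact Finset.sum_congr rfl fun p _ => by rw [coeff_smul, smul_eq_mul]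
  have hterm : ∀ p ∈ c.support, p ≠ p0.1 → c p * p.coeff ε = 0 := by
    intro p hp hne
    have hpe : p = monomial (aδ p hp) (1:A) * F (aα p hp) := h4 p hp
    rw [hpe, coeff_monomial_mul'']
    split_ifs with hle
    · set β := ε - aδ p hp with hβ
      by_cases hβ0 : (F (aα p hp)).coeff β = 0
      · rw [hβ0, mul_zero]
      · exfalso
        have hβsupp : β ∈ (F (aα p hp)).support := mem_support_iff.mpr hβ0
        have heqε : aδ p hp + β = ε := add_tsub_cancel_of_le hle
        rcases eq_or_ne β (aα p hp) with hββ | hββ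
        · -- heads coincide: uniqueness forces p = p0
          have huniq := star_unique hJ.1 (h1 p0.1 p0.2) (h1 p hp) (h3 p0.1 p0.2) (h3 p hp)
            (by rw [← hββ] at *; exact heqε)
          apply hne
          rw [hpe, h4 p0.1 p0.2, huniq.1, huniq.2]
        · obtain ⟨hβJ, _⟩ := (hF _ (h1 p hp)).2 β hβsupp hββ
          have hkey : lexLt δ0 (aδ p hp) :=
            key_lex hJ.1 hβJ hα0J (h3 p0.1 p0.2) (hε ▸ heqε.symm)
          have hmle := hmax ⟨p, hp⟩ (Finset.mem_attach _ _)
          exact absurd (emb_lt_iff.mpr hkey) (not_lt.mpr hmle)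
    · rw [mul_zero]
  have hp0coeff : (p0.1 : MvPolynomial (Fin (n + 1)) A).coeff ε = 1 := by
    rw [h4 p0.1 p0.2, coeff_monomial_mul'']
    rw [if_pos le_self_add]
    rw [hε]
    rw [add_tsub_cancel_left]
    exact (hF _ (h1 p0.1 p0.2)).1
  have : g.coeff ε = c p0.1 := by
    rw [hexpand, Finset.sum_eq_single_of_mem p0.1 p0.2 hterm, hp0coeff, mul_one]
  have hcne : c p0.1 ≠ 0 := Finsupp.mem_support_iff.mp p0.2
  rw [hcoeff] at this
  exact hcne this.symm

lemma Mdeg_le_spanF {J : Set (Mon n)} (hJ : IsStronglyStable J)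
    {F : Mon n → MvPolynomial (Fin (n + 1)) A} (hF : IsMarkedSet J F) (s : ℕ)
    (h3 : Submodule.span A (SFSet J F s) ≤ Submodule.span A (FSet J F s)) :
    Mdeg A J F s ≤ Submodule.span A (FSet J F s) := by
  rw [Mdeg, Submodule.span_le]
  rintro p ⟨α, δ, hα, hdeg, rfl⟩
  by_cases hge : minGeMax α δ
  · exact Submodule.subset_span ⟨α, δ, hα, hdeg, hge, rfl⟩
  · have hmem : δ + α ∈ J := mem_of_le hJ.1 hα.1 le_add_self
    obtain ⟨α', δ', hα', hge', hsum⟩ := star_exists hJ _ hmem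
    have hdeg' : mdeg α' + mdeg δ' = s := by
      have h1 : mdeg δ' + mdeg α' = mdeg δ + mdeg α := by
        rw [← mdeg_add, ← mdeg_add, hsum]
      omega
    have hq : monomial δ (1:A) * F α - monomial δ' (1:A) * F α' ∈ SFSet J F s :=
      ⟨α', δ', α, δ, hα', hα, hdeg, hge, hdeg', hge', hsum.symm, rfl⟩
    have hsplit : monomial δ (1:A) * F α
        = (monomial δ (1:A) * F α - monomial δ' (1:A) * F α') + monomial δ' (1:A) * F α' := by
      ring
    rw [hsplit]
    exact Submodule.add_mem _ (h3 (Submodule.subset_span hq))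
      (Submodule.subset_span ⟨α', δ', hα', hdeg', hge', rfl⟩)

end MarkedFamilies
namespace MarkedFamilies
variable {n : ℕ} {A : Type*} [CommRing A]

lemma mdeg_of_homog {s : ℕ} {f : MvPolynomial (Fin (n + 1)) A}
    (hf : f ∈ homogeneousSubmodule (Fin (n + 1)) A s) {ε : Mon n}
    (hε : f.coeff ε ≠ 0) : mdeg ε = s := by
  have h := (mem_homogeneousSubmodule _ _ |>.mp hf) hε
  rw [← degree_eq_mdeg, Finsupp.degree_eq_weight_one]
  exact h

lemma spanF_le_Mdeg {J : Set (Mon n)} {F : Mon n → MvPolynomial (Fin (n + 1)) A} (s : ℕ) :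
    Submodule.span A (FSet J F s) ≤ Mdeg A J F s := by
  apply Submodule.span_mono
  rintro p ⟨α, δ, hα, hdeg, _, rfl⟩
  exact ⟨α, δ, hα, hdeg, rfl⟩

lemma spanF_le_ideal {J : Set (Mon n)} {F : Mon n → MvPolynomial (Fin (n + 1)) A} (s : ℕ) :
    Submodule.span A (FSet J F s) ≤ Submodule.restrictScalars A (markedIdeal J F) := by
  rw [Submodule.span_le]
  rintro p ⟨α, δ, hα, _, _, rfl⟩
  exact monMul_mem_ideal hα δ

lemma nSpanDeg_le_nSpan {J : Set (Mon n)} (s : ℕ) :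
    nSpanDeg A J s ≤ nSpan A J := by
  apply Submodule.span_mono
  rintro p ⟨β, hβ, _, rfl⟩
  exact ⟨β, hβ, rfl⟩

end MarkedFamilies
open MarkedFamilies in
/-- characterizations of `J`-marked bases. -/
theorem stmt_7 {n : ℕ} {A : Type*} [CommRing A] [IsNoetherianRing A]
    (J : Set (Mon n)) (hJ : IsStronglyStable J)
    (F : Mon n → MvPolynomial (Fin (n + 1)) A) (hF : IsMarkedSet J F) :
    List.TFAE
      [IsMarkedBasis J F,
       ∀ s : ℕ, idealDeg A (markedIdeal J F) s = Submodule.span A (FSet J F s),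
       ∀ s : ℕ, Submodule.span A (SFSet J F s) ≤ Submodule.span A (FSet J F s),
       Submodule.restrictScalars A (markedIdeal J F) ⊓ nSpan A J = ⊥] := by
  have hmono : IsMonomialIdeal J := hJ.1
  tfae_have 1 → 4
  | h => disjoint_iff.mp h.2.disjoint
  tfae_have 4 → 1
  | h4 => by
    refine ⟨hF, disjoint_iff.mpr h4, codisjoint_iff.mpr ?_⟩
    rw [eq_top_iff]
    intro f _
    have hm : ∀ ε : Mon n, monomial ε (1:A)
        ∈ Submodule.restrictScalars A (markedIdeal J F) ⊔ nSpan A J := by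
      intro ε
      by_cases hε : ε ∈ J
      · obtain ⟨α, δ, hα, hge, hsum⟩ := star_exists hJ _ hε
        have hdeg : mdeg α + mdeg δ = mdeg ε := by
          rw [← hsum, mdeg_add]; omega
        have h := monomial_mem_sup hJ hF (mdeg ε) δ α hα hge hdeg
        rw [hsum] at h
        exact SetLike.le_def.mp (sup_le_sup (spanF_le_ideal (J := J) (F := F) (mdeg ε)) (nSpanDeg_le_nSpan (A := A) (J := J) (mdeg ε))) h
      · exact Submodule.mem_sup_right (Submodule.subset_span ⟨ε, hε, rfl⟩)
    have hf : f = ∑ ε ∈ f.support, (f.coeff ε) • monomial ε (1:A) := by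
      conv_lhs => rw [f.as_sum]
      exact Finset.sum_congr rfl fun ε _ => by rw [smul_monomial, smul_eq_mul, mul_one]
    have hs := Submodule.sum_mem
      (Submodule.restrictScalars A (markedIdeal J F) ⊔ nSpan A J)
      (fun ε (_ : ε ∈ f.support) => Submodule.smul_mem _ (f.coeff ε) (hm ε))
    rwa [← hf] at hs
  tfae_have 4 → 2
  | h4 => by
    intro s
    apply le_antisymm
    · intro f hf
      have hfh : f ∈ homogeneousSubmodule (Fin (n + 1)) A s := hf.2
      have hm : ∀ ε ∈ f.support, monomial ε (1:A)
          ∈ Submodule.span A (FSet J F s) ⊔ nSpanDeg A J s := by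
        intro ε hεs
        have hdeg : mdeg ε = s := mdeg_of_homog hfh (mem_support_iff.mp hεs)
        by_cases hε : ε ∈ J
        · obtain ⟨α, δ, hα, hge, hsum⟩ := star_exists hJ _ hε
          have hdeg' : mdeg α + mdeg δ = s := by
            rw [← hdeg, ← hsum, mdeg_add]; omega
          have h := monomial_mem_sup hJ hF s δ α hα hge hdeg'
          rwa [hsum] at h
        · exact Submodule.mem_sup_right (Submodule.subset_span ⟨ε, hε, hdeg, rfl⟩)
      have hf2 : f = ∑ ε ∈ f.support, (f.coeff ε) • monomial ε (1:A) := by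
        conv_lhs => rw [f.as_sum]
        exact Finset.sum_congr rfl fun ε _ => by rw [smul_monomial, smul_eq_mul, mul_one]
      have hs := Submodule.sum_mem
        (Submodule.span A (FSet J F s) ⊔ nSpanDeg A J s)
        (fun ε (hε : ε ∈ f.support) => Submodule.smul_mem _ (f.coeff ε) (hm ε hε))
      rw [← hf2] at hs
      obtain ⟨g, hg, h, hh, hgh⟩ := Submodule.mem_sup.mp hs
      have hhI : h ∈ Submodule.restrictScalars A (markedIdeal J F) := by
        have : h = f - g := by rw [← hgh]; ring
        rw [this]
        exact Submodule.sub_mem _ hf.1 (spanF_le_ideal s hg)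
      have hh0 : h = 0 := by
        have hb : h ∈ Submodule.restrictScalars A (markedIdeal J F) ⊓ nSpan A J :=
          Submodule.mem_inf.mpr ⟨hhI, nSpanDeg_le_nSpan s hh⟩
        rw [h4] at hb
        simpa using hb
      rw [← hgh, hh0, add_zero]
      exact hg
    · exact le_trans (spanF_le_Mdeg s) (Mdeg_le_idealDeg hF s)
  tfae_have 2 → 3
  | h2 => by
    intro s
    rw [Submodule.span_le]
    rintro p ⟨α', γ, β, δ, hα', hβ, hdegβ, hgeβ, hdegα, hgeα, heq, rfl⟩
    rw [← h2 s]
    refine Submodule.sub_mem _ ?_ ?_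
    · refine Submodule.mem_inf.mpr ⟨monMul_mem_ideal hβ δ, ?_⟩
      rw [← hdegβ]
      exact monMul_homog hF hβ δ
    · refine Submodule.mem_inf.mpr ⟨monMul_mem_ideal hα' γ, ?_⟩
      rw [← hdegα]
      exact monMul_homog hF hα' γ
  tfae_have 3 → 2
  | h3 => by
    intro s
    apply le_antisymm
    · exact le_trans (idealDeg_le_Mdeg hF s) (Mdeg_le_spanF hJ hF s (h3 s))
    · exact le_trans (spanF_le_Mdeg s) (Mdeg_le_idealDeg hF s)
  tfae_have 2 → 4
  | h2 => by
    rw [eq_bot_iff]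
    rintro f hf
    obtain ⟨hfI, hfN⟩ := Submodule.mem_inf.mp hf
    rw [Submodule.mem_bot]
    have hcomp : ∀ s : ℕ, homogeneousComponent s f = 0 := by
      intro s
      have hfM : f ∈ Mfull A J F := by rw [← Mfull_eq]; exact hfI
      have hM : homogeneousComponent s f ∈ Mdeg A J F s := homComp_Mfull hF s hfM
      have hspan : homogeneousComponent s f ∈ Submodule.span A (FSet J F s) := by
        have h := Mdeg_le_idealDeg hF s hM
        rwa [h2 s] at h
      have hsupp : ∀ ε ∈ (homogeneousComponent s f).support, ε ∉ J := by
        intro ε hε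
        have hc : f.coeff ε ≠ 0 := by
          have := mem_support_iff.mp hε
          rw [coeff_homogeneousComponent] at this
          by_contra hcc
          simp [hcc] at this
        exact mem_nSpan_iff.mp hfN ε (mem_support_iff.mpr hc)
      exact span_FSet_nSpan_eq_zero hJ hF hspan hsupp
    calc f = ∑ i ∈ Finset.range (f.totalDegree + 1), homogeneousComponent i f :=
        (sum_homogeneousComponent f).symm
      _ = 0 := Finset.sum_eq_zero fun i _ => hcomp i
  tfae_finish
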